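/- Let reals b₁, b₂, b₃, b₄, c₂, c₃, c₄ and a₃₂, a₄₂, a₄₃ satisfy b₁ + b₂ + b₃ + b₄ = 1 together with the fourth-order conditions: b₂c₂ + b₃c₃ + b₄c₄ = 1/2, b₂c₂² + b₃c₃² + b₄c₄² = 1/3, b₂c₂³ + b₃c₃³ + b₄c₄³ = 1/4, a₃₂b₃c₂ + a₄₂b₄c₂ + a₄₃b₄c₃ = 1/6, a₃₂b₃c₂c₃ + a₄₂b₄c₂c₄ + a₄₃b₄c₃c₄ = 1/8, a₃₂b₃c₂² + a₄₂b₄c₂² + a₄₃b₄c₃² = 1/12, and a₃₂a₄₃b₄c₂ = 1/24. Then necessarily c₄ = 1. -/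
import Mathlib


/-- For a four-stage explicit Runge–Kutta method, the consistency condition
together with the fourth-order conditions forces `c₄ = 1`. -/
theorem stmt_17 (b₁ b₂ b₃ b₄ c₂ c₃ c₄ a₃₂ a₄₂ a₄₃ : ℝ)
    (hb : b₁ + b₂ + b₃ + b₄ = 1)
    (hoc1 : b₂ * c₂ + b₃ * c₃ + b₄ * c₄ = 1 / 2)
    (hoc2 : b₂ * c₂ ^ 2 + b₃ * c₃ ^ 2 + b₄ * c₄ ^ 2 = 1 / 3)
    (hoc3 : b₂ * c₂ ^ 3 + b₃ * c₃ ^ 3 + b₄ * c₄ ^ 3 = 1 / 4)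
    (hoc4 : a₃₂ * b₃ * c₂ + a₄₂ * b₄ * c₂ + a₄₃ * b₄ * c₃ = 1 / 6)
    (hoc5 : a₃₂ * b₃ * c₂ * c₃ + a₄₂ * b₄ * c₂ * c₄ + a₄₃ * b₄ * c₃ * c₄ = 1 / 8)
    (hoc6 : a₃₂ * b₃ * c₂ ^ 2 + a₄₂ * b₄ * c₂ ^ 2 + a₄₃ * b₄ * c₃ ^ 2 = 1 / 12)
    (hoc7 : a₃₂ * a₄₃ * b₄ * c₂ = 1 / 24) :
    c₄ = 1 := by
  have E1 : a₃₂ * b₃ * c₂ * (c₃ - c₄) = 1 / 8 - c₄ / 6 := by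
    linear_combination hoc5 - c₄ * hoc4
  have E2 : a₄₃ * b₄ * c₃ * (c₃ - c₂) = 1 / 12 - c₂ / 6 := by
    linear_combination hoc6 - c₂ * hoc4
  have E3 : b₃ * c₃ * (c₃ - c₂) * (c₃ - c₄) = 1 / 4 - (c₂ + c₄) / 3 + c₂ * c₄ / 2 := by
    linear_combination hoc3 - (c₂ + c₄) * hoc2 + c₂ * c₄ * hoc1
  have hc2 : c₂ ≠ 0 := by
    intro h
    rw [h] at hoc7
    norm_num at hoc7
  have P : (a₃₂ * b₃ * c₂ * (c₃ - c₄)) * (a₄₃ * b₄ * c₃ * (c₃ - c₂))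
      = (1 / 8 - c₄ / 6) * (1 / 12 - c₂ / 6) := by rw [E1, E2]
  have key : c₂ * (c₄ - 1) = 0 := by
    linear_combination -144 * P + 144 * (b₃ * c₃ * (c₃ - c₂) * (c₃ - c₄)) * hoc7 + 6 * E3
  have := mul_eq_zero.mp key
  rcases this with h | h
  · exact absurd h hc2
  · linarith
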